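/- Let G be the Gurariy space. For every finite-dimensional Banach spaces X₀ ⊆ X₁, every n ∈ ℕ, and every 2⁻ⁿ-isometry f : X₀ → G, there exists a 2⁻⁽ⁿ⁺¹⁾-isometry g : X₁ → G such that ‖g|_{X₀} − f‖ < 2·2⁻ⁿ. Consequently, for any separable Banach space X with dense increasing union of finite-dimensional subspaces X₁ ⊆ X₂ ⊆ ⋯, there exists a linear isometric embedding of X into G. -/

import Mathlib

/-- `f` is an `ε`-isometry: `(1+ε)⁻¹ ‖x‖ < ‖f x‖ < (1+ε) ‖x‖` for all `x ≠ 0`. -/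
def IsEpsIsometry {X G : Type*} [NormedAddCommGroup X] [NormedSpace ℝ X]
    [NormedAddCommGroup G] [NormedSpace ℝ G] (ε : ℝ) (f : X →L[ℝ] G) : Prop :=
  ∀ x : X, x ≠ 0 → (1 + ε)⁻¹ * ‖x‖ < ‖f x‖ ∧ ‖f x‖ < (1 + ε) * ‖x‖

/-- `G` is a Gurariy space: for every `ε > 0`, all finite-dimensional `X ⊆ Y` and every
linear isometry `f : X → G` there is an `ε`-isometry `g : Y → G` extending `f`. -/
def IsGurariy (G : Type) [NormedAddCommGroup G] [NormedSpace ℝ G] : Prop :=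
  ∀ (ε : ℝ), 0 < ε →
    ∀ (Y : Type) [NormedAddCommGroup Y] [NormedSpace ℝ Y] [FiniteDimensional ℝ Y]
      (X : Submodule ℝ Y) (f : X →ₗᵢ[ℝ] G),
      ∃ g : Y →L[ℝ] G, IsEpsIsometry ε g ∧ ∀ x : X, g x = f x

noncomputable section KS

/-- Type synonym for `Y × G` carrying the Kubiś–Solecki amalgamation norm. -/
def KSW (Y G : Type*) : Type _ := Y × G

instance (Y G : Type*) [AddCommGroup Y] [AddCommGroup G] : AddCommGroup (KSW Y G) :=
  inferInstanceAs (AddCommGroup (Y × G))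

instance (Y G : Type*) [AddCommGroup Y] [AddCommGroup G] [Module ℝ Y] [Module ℝ G] :
    Module ℝ (KSW Y G) := inferInstanceAs (Module ℝ (Y × G))

variable {Y G : Type*} [NormedAddCommGroup Y] [NormedSpace ℝ Y]
  [NormedAddCommGroup G] [NormedSpace ℝ G]

/-- The amalgamation "norm" function. -/
def KSN (X₀ : Submodule ℝ Y) (f : X₀ →L[ℝ] G) (ε : ℝ) (p : Y × G) : ℝ :=
  ⨅ x : X₀, (‖p.1 - x‖ + ‖p.2 + f x‖ + ε * ‖(x : Y)‖)

namespace KSN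

variable (X₀ : Submodule ℝ Y) (f : X₀ →L[ℝ] G) {ε : ℝ}

lemma bdd (p : Y × G) (hε : 0 ≤ ε) :
    BddBelow (Set.range fun x : X₀ => (‖p.1 - x‖ + ‖p.2 + f x‖ + ε * ‖(x : Y)‖)) := by
  refine ⟨0, fun r hr => ?_⟩
  obtain ⟨x, rfl⟩ := hr
  positivity

lemma le (p : Y × G) (hε : 0 ≤ ε) (x : X₀) :
    KSN X₀ f ε p ≤ ‖p.1 - x‖ + ‖p.2 + f x‖ + ε * ‖(x : Y)‖ :=
  ciInf_le (bdd X₀ f p hε) x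

lemma le_of (p : Y × G) {c : ℝ}
    (h : ∀ x : X₀, c ≤ ‖p.1 - x‖ + ‖p.2 + f x‖ + ε * ‖(x : Y)‖) :
    c ≤ KSN X₀ f ε p :=
  le_ciInf h

lemma nonneg (p : Y × G) (hε : 0 ≤ ε) : 0 ≤ KSN X₀ f ε p :=
  le_of X₀ f p (fun x => by positivity)

lemma map_zero (hε : 0 ≤ ε) : KSN X₀ f ε 0 = 0 := by
  refine le_antisymm ?_ (nonneg X₀ f 0 hε)
  simpa using le X₀ f 0 hε 0

lemma add_le (p q : Y × G) (hε : 0 ≤ ε) :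
    KSN X₀ f ε (p + q) ≤ KSN X₀ f ε p + KSN X₀ f ε q := by
  refine le_ciInf_add_ciInf fun x x' => ?_
  refine (le X₀ f (p + q) hε (x + x')).trans ?_
  have h1 : ‖(p + q).1 - ↑(x + x')‖ ≤ ‖p.1 - x‖ + ‖q.1 - x'‖ := by
    have : (p + q).1 - ((x : Y) + (x' : Y)) = (p.1 - x) + (q.1 - x') := by
      simp [Prod.fst_add]; abel
    simp only [Submodule.coe_add, this]
    exact norm_add_le _ _
  have h2 : ‖(p + q).2 + f (x + x')‖ ≤ ‖p.2 + f x‖ + ‖q.2 + f x'‖ := by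
    have : (p + q).2 + f (x + x') = (p.2 + f x) + (q.2 + f x') := by
      simp [Prod.snd_add, map_add]; abel
    rw [this]; exact norm_add_le _ _
  have h3 : ε * ‖((x + x' : X₀) : Y)‖ ≤ ε * ‖(x : Y)‖ + ε * ‖(x' : Y)‖ := by
    rw [← mul_add]
    exact mul_le_mul_of_nonneg_left (by simpa using norm_add_le (x : Y) (x' : Y)) hε
  linarith

lemma neg_le (p : Y × G) (hε : 0 ≤ ε) : KSN X₀ f ε (-p) ≤ KSN X₀ f ε p := by
  refine le_of X₀ f _ (fun x => ?_)
  refine (le X₀ f (-p) hε (-x)).trans_eq ?_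
  have h1 : (-p).1 - ((-x : X₀) : Y) = -(p.1 - x) := by simp; abel
  have h2 : (-p).2 + f (-x) = -(p.2 + f x) := by simp [map_neg]; abel
  rw [h1, h2, norm_neg, norm_neg]
  simp

lemma map_neg (p : Y × G) (hε : 0 ≤ ε) : KSN X₀ f ε (-p) = KSN X₀ f ε p :=
  le_antisymm (neg_le X₀ f p hε) (by simpa using neg_le X₀ f (-p) hε)

lemma smul_le (c : ℝ) (p : Y × G) (hε : 0 ≤ ε) :
    KSN X₀ f ε (c • p) ≤ |c| * KSN X₀ f ε p := by
  rcases eq_or_ne c 0 with rfl | hc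
  · simp [map_zero X₀ f hε, nonneg X₀ f p hε]
  rw [show KSN X₀ f ε p = ⨅ x : X₀, (‖p.1 - x‖ + ‖p.2 + f x‖ + ε * ‖(x : Y)‖) from rfl,
    Real.mul_iInf_of_nonneg (abs_nonneg c)]
  refine le_ciInf fun x => ?_
  refine (le X₀ f (c • p) hε (c • x)).trans_eq ?_
  have h1 : (c • p).1 - ((c • x : X₀) : Y) = c • (p.1 - x) := by
    simp [smul_sub]
  have h2 : (c • p).2 + f (c • x) = c • (p.2 + f x) := by
    simp [map_smul, smul_add]
  rw [h1, h2, norm_smul, norm_smul, Submodule.coe_smul, norm_smul]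
  simp [Real.norm_eq_abs]
  ring
lemma map_smul (c : ℝ) (p : Y × G) (hε : 0 ≤ ε) :
    KSN X₀ f ε (c • p) = |c| * KSN X₀ f ε p := by
  rcases eq_or_ne c 0 with rfl | hc
  · simp [map_zero X₀ f hε]
  refine le_antisymm (smul_le X₀ f c p hε) ?_
  have := smul_le X₀ f c⁻¹ (c • p) hε
  rw [inv_smul_smul₀ hc] at this
  have habs : 0 < |c| := abs_pos.mpr hc
  rw [abs_inv] at this
  calc |c| * KSN X₀ f ε p ≤ |c| * (|c|⁻¹ * KSN X₀ f ε (c • p)) :=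
        mul_le_mul_of_nonneg_left this habs.le
    _ = KSN X₀ f ε (c • p) := by field_simp

section bounds

variable (hε : 0 < ε) (hε1 : ε ≤ 1)
  (hlo : ∀ x : X₀, (1 + ε)⁻¹ * ‖(x : Y)‖ ≤ ‖f x‖)
  (hhi : ∀ x : X₀, ‖f x‖ ≤ (1 + ε) * ‖(x : Y)‖)

include hε hlo in
lemma fst_eq (y : Y) : KSN X₀ f ε (y, 0) = ‖y‖ := by
  refine le_antisymm (by simpa using le X₀ f (y, 0) hε.le 0) ?_
  refine le_of X₀ f _ (fun x => ?_)
  have h1 : (1 + ε)⁻¹ * ‖(x : Y)‖ + ε * ‖(x : Y)‖ ≥ ‖(x : Y)‖ := by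
    have h2 : 0 < 1 + ε := by linarith
    rw [ge_iff_le, ← sub_nonneg]
    have : (1 + ε)⁻¹ * ‖(x : Y)‖ + ε * ‖(x : Y)‖ - ‖(x : Y)‖
        = (1 + ε)⁻¹ * ((ε * ε) * ‖(x : Y)‖) := by
      field_simp; ring
    rw [this]
    positivity
  have h3 := hlo x
  have h4 : ‖y‖ ≤ ‖y - x‖ + ‖(x : Y)‖ := by
    simpa using norm_add_le (y - x) (x : Y)
  simp only [zero_add]
  linarith

include hε hhi in
lemma snd_eq (v : G) : KSN X₀ f ε (0, v) = ‖v‖ := by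
  refine le_antisymm (by simpa using le X₀ f (0, v) hε.le 0) ?_
  refine le_of X₀ f _ (fun x => ?_)
  have h1 := hhi x
  have h2 : ‖v‖ ≤ ‖v + f x‖ + ‖f x‖ := by simpa using norm_add_le (v + f x) (-(f x))
  have h3 : ‖(0 : Y) - (x : Y)‖ = ‖(x : Y)‖ := by rw [zero_sub, norm_neg]
  have h4 : 0 ≤ ‖(x : Y)‖ := norm_nonneg _
  simp only [h3]
  nlinarith

include hε in
lemma graph_le (x : X₀) : KSN X₀ f ε ((x : Y), -f x) ≤ ε * ‖(x : Y)‖ := by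
  simpa using le X₀ f ((x : Y), -f x) hε.le x

include hε hε1 hhi in
lemma eq_zero (p : Y × G) (h : KSN X₀ f ε p = 0) : p = 0 := by
  have hy : ε * ‖p.1‖ ≤ KSN X₀ f ε p := by
    refine le_of X₀ f _ (fun x => ?_)
    have h1 : ‖p.1‖ ≤ ‖p.1 - x‖ + ‖(x : Y)‖ := by simpa using norm_add_le (p.1 - x) (x : Y)
    have h2 : ε * ‖p.1 - (x : Y)‖ ≤ ‖p.1 - x‖ := by
      nlinarith [norm_nonneg (p.1 - (x : Y))]
    nlinarith [norm_nonneg (p.2 + f x), norm_nonneg ((x:Y))]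
  have hv : ε / (1 + ε) * ‖p.2‖ ≤ KSN X₀ f ε p := by
    refine le_of X₀ f _ (fun x => ?_)
    have h1 := hhi x
    have h2 : ‖p.2‖ ≤ ‖p.2 + f x‖ + ‖f x‖ := by simpa using norm_add_le (p.2 + f x) (-(f x))
    have h3 : 0 < 1 + ε := by linarith
    rw [div_mul_eq_mul_div, div_le_iff₀ h3]
    nlinarith [norm_nonneg (p.1 - (x:Y)), norm_nonneg (p.2 + f x), norm_nonneg ((x:Y)),
      norm_nonneg p.2]
  rw [h] at hy hv
  have h5 : 0 < 1 + ε := by linarith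
  have hy' : ‖p.1‖ = 0 := le_antisymm (by nlinarith [norm_nonneg p.1]) (norm_nonneg _)
  have hv' : ‖p.2‖ = 0 := by
    have : 0 < ε / (1 + ε) := by positivity
    exact le_antisymm (by nlinarith [norm_nonneg p.2]) (norm_nonneg _)
  have : p.1 = 0 := norm_eq_zero.mp hy'
  have : p.2 = 0 := norm_eq_zero.mp hv'
  exact Prod.ext (norm_eq_zero.mp hy') (norm_eq_zero.mp hv')

end bounds

end KSN

/-- The Kubiś–Solecki amalgamation norm, bundled on the type synonym. -/
def KSnorm (X₀ : Submodule ℝ Y) (f : X₀ →L[ℝ] G) (ε : ℝ) (hε : 0 < ε) (hε1 : ε ≤ 1)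
    (hhi : ∀ x : X₀, ‖f x‖ ≤ (1 + ε) * ‖(x : Y)‖) : AddGroupNorm (KSW Y G) where
  toFun := fun p => KSN X₀ f ε p
  map_zero' := KSN.map_zero X₀ f hε.le
  add_le' := fun p q => KSN.add_le X₀ f p q hε.le
  neg' := fun p => KSN.map_neg X₀ f p hε.le
  eq_zero_of_map_eq_zero' := fun p h => KSN.eq_zero X₀ f hε hε1 hhi p h

end KS

section Part1

lemma ks_part1 {G : Type} [NormedAddCommGroup G] [NormedSpace ℝ G] (hG : IsGurariy G)
    (Y : Type) [NormedAddCommGroup Y] [NormedSpace ℝ Y] [FiniteDimensional ℝ Y]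
    (X₀ : Submodule ℝ Y) (n : ℕ) (f : X₀ →L[ℝ] G)
    (hf : IsEpsIsometry ((2 : ℝ) ^ (-(n : ℤ))) f) :
    ∃ g : Y →L[ℝ] G, IsEpsIsometry ((2 : ℝ) ^ (-(n : ℤ) - 1)) g ∧
      ‖g.comp X₀.subtypeL - f‖ < 2 * (2 : ℝ) ^ (-(n : ℤ)) := by
  set ε : ℝ := (2 : ℝ) ^ (-(n : ℤ)) with hεdef
  set ε' : ℝ := (2 : ℝ) ^ (-(n : ℤ) - 1) with hε'def
  have hε : 0 < ε := by positivity
  have hε' : 0 < ε' := by positivity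
  have hε1 : ε ≤ 1 := zpow_le_one_of_nonpos₀ (by norm_num) (by simp)
  have hε'half : ε' = ε / 2 := by
    rw [hεdef, hε'def, zpow_sub₀ (by norm_num)]
    norm_num
  have hlo : ∀ x : X₀, (1 + ε)⁻¹ * ‖(x : Y)‖ ≤ ‖f x‖ := by
    intro x
    rcases eq_or_ne x 0 with rfl | hx
    · simp
    · exact (hf x hx).1.le
  have hhi : ∀ x : X₀, ‖f x‖ ≤ (1 + ε) * ‖(x : Y)‖ := by
    intro x
    rcases eq_or_ne x 0 with rfl | hx
    · simp
    · exact (hf x hx).2.le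
  letI : NormedAddCommGroup (KSW Y G) := (KSnorm X₀ f ε hε hε1 hhi).toNormedAddCommGroup
  have hnorm : ∀ p : KSW Y G, ‖p‖ = KSN X₀ f ε p := fun _ => rfl
  letI : NormedSpace ℝ (KSW Y G) :=
    ⟨fun c p => by
      rw [hnorm, hnorm, Real.norm_eq_abs]; exact (KSN.map_smul X₀ f c p hε.le).le⟩
  -- the finite-dimensional subspace W = Y × F of KSW
  let F : Submodule ℝ G := LinearMap.range (f : X₀ →ₗ[ℝ] G)
  let S : Submodule ℝ (KSW Y G) := Submodule.prod (⊤ : Submodule ℝ Y) F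
  haveI : FiniteDimensional ℝ F := by
    have : FiniteDimensional ℝ X₀ := inferInstance
    exact LinearMap.finiteDimensional_range _
  haveI : FiniteDimensional ℝ S :=
    Module.Finite.iff_fg.mpr
      ((Module.finite_def.mp inferInstance : (⊤ : Submodule ℝ Y).FG).prod
        (Module.Finite.iff_fg.mp inferInstance))
  -- the subspace X' = {0} × F of S and the isometry to G
  let X' : Submodule ℝ S := Submodule.comap S.subtype (Submodule.prod (⊥ : Submodule ℝ Y) F)
  have hX'fst : ∀ w : X', ((w : KSW Y G) : Y × G).1 = 0 := by
    intro w
    have := w.2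
    simp only [X', Submodule.mem_comap, Submodule.mem_prod, Submodule.mem_bot] at this
    exact this.1
  let jlin : X' →ₗ[ℝ] G :=
    (LinearMap.snd ℝ Y G).comp (S.subtype.comp X'.subtype)
  have hj : ∀ w : X', jlin w = ((w : KSW Y G) : Y × G).2 := fun _ => rfl
  have hjnorm : ∀ w : X', ‖jlin w‖ = ‖w‖ := by
    intro w
    have h1 : ‖w‖ = ‖((w : S) : KSW Y G)‖ := rfl
    rw [hj, h1, hnorm]
    have h2 : (((w : S) : KSW Y G) : Y × G) = ((0 : Y), ((w : KSW Y G) : Y × G).2) :=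
      Prod.ext (hX'fst w) rfl
    rw [show (((w : S) : KSW Y G) : Y × G) = ((w : KSW Y G) : Y × G) from rfl] at h2 ⊢
    rw [h2, KSN.snd_eq X₀ f hε hhi]
  let j : X' →ₗᵢ[ℝ] G := ⟨jlin, hjnorm⟩
  obtain ⟨g, hg, hgext⟩ := hG ε' hε' S X' j
  -- the isometric embedding of Y into S
  have hmemS : ∀ y : Y, ((y, (0 : G)) : Y × G) ∈ S :=
    fun y => Submodule.mem_prod.mpr ⟨Submodule.mem_top, F.zero_mem⟩
  let iYlin : Y →ₗ[ℝ] S := LinearMap.codRestrict S ((LinearMap.inl ℝ Y G)) hmemS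
  have hiYnorm : ∀ y : Y, ‖iYlin y‖ = ‖y‖ := by
    intro y
    have h2 : ‖iYlin y‖ = ‖((iYlin y : S) : KSW Y G)‖ := rfl
    have h1 : ((iYlin y : S) : KSW Y G) = ((y, (0 : G)) : Y × G) := rfl
    rw [h2]
    exact (hnorm _).trans (KSN.fst_eq X₀ f hε hlo y)
  let iY : Y →ₗᵢ[ℝ] S := ⟨iYlin, hiYnorm⟩
  refine ⟨g.comp iY.toContinuousLinearMap, ?_, ?_⟩
  · intro y hy
    have hne : iY y ≠ 0 := by
      intro h
      apply hy
      have := hiYnorm y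
      rw [show iYlin y = iY y from rfl, h, norm_zero] at this
      exact norm_eq_zero.mp this.symm
    have := hg (iY y) hne
    rw [show ‖iY y‖ = ‖y‖ from hiYnorm y] at this
    exact this
  · -- norm estimate
    have hgup : ∀ w : S, ‖g w‖ ≤ (1 + ε') * ‖w‖ := by
      intro w
      rcases eq_or_ne w 0 with rfl | hw
      · simp
      · exact (hg w hw).2.le
    have key : ∀ x : X₀, ‖(g.comp iY.toContinuousLinearMap).comp X₀.subtypeL x - f x‖
        ≤ ((1 + ε') * ε) * ‖x‖ := by
      intro x
      have hmemu : (((0 : Y), f x) : Y × G) ∈ S :=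
        Submodule.mem_prod.mpr ⟨Submodule.mem_top, ⟨x, rfl⟩⟩
      let u : S := ⟨((0 : Y), f x), hmemu⟩
      have hu : u ∈ X' := by
        simp only [X', Submodule.mem_comap, Submodule.mem_prod, Submodule.mem_bot]
        exact ⟨rfl, ⟨x, rfl⟩⟩
      have hgu : g u = f x := by
        have := hgext ⟨u, hu⟩
        rw [show ((⟨u, hu⟩ : X') : S) = u from rfl] at this
        rw [this]
        rfl
      have hdiff : (g.comp iY.toContinuousLinearMap).comp X₀.subtypeL x - f x
          = g (iY (x : Y) - u) := by
        rw [map_sub, hgu]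
        rfl
      rw [hdiff]
      refine (hgup _).trans ?_
      have hw : ‖iY (x : Y) - u‖ ≤ ε * ‖(x : Y)‖ := by
        have h1 : ((iY (x : Y) - u : S) : KSW Y G) = (((x : Y), -f x) : Y × G) := by
          show ((((x : Y), (0:G)) : Y × G) - (((0 : Y), f x) : Y × G) : Y × G) = _
          ext <;> simp
        have h2 : ‖iY (x : Y) - u‖ = ‖((iY (x : Y) - u : S) : KSW Y G)‖ := rfl
        rw [h2]
        exact (hnorm _).trans_le (h1 ▸ KSN.graph_le X₀ f hε x)
      calc (1 + ε') * ‖iY (x : Y) - u‖ ≤ (1 + ε') * (ε * ‖(x : Y)‖) :=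
            mul_le_mul_of_nonneg_left hw (by positivity)
        _ = ((1 + ε') * ε) * ‖(x : Y)‖ := by ring
    refine lt_of_le_of_lt (ContinuousLinearMap.opNorm_le_bound _ (by positivity) key) ?_
    have : ε' < 1 := by rw [hε'half]; linarith
    nlinarith

end Part1

section Part2

variable {G : Type} [NormedAddCommGroup G] [NormedSpace ℝ G]

lemma ks_step (hG : IsGurariy G) (X : Type) [NormedAddCommGroup X] [NormedSpace ℝ X]
    (Xn : ℕ → Submodule ℝ X) (hmono : Monotone Xn)
    (hfd : ∀ n, FiniteDimensional ℝ (Xn n)) (n : ℕ) (fn : ↥(Xn n) →L[ℝ] G)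
    (hfn : IsEpsIsometry ((2 : ℝ) ^ (-(n : ℤ))) fn) :
    ∃ g : ↥(Xn (n + 1)) →L[ℝ] G, IsEpsIsometry ((2 : ℝ) ^ (-((n + 1 : ℕ) : ℤ))) g ∧
      ∀ (x : X) (hx : x ∈ Xn n),
        ‖g ⟨x, hmono (Nat.le_succ n) hx⟩ - fn ⟨x, hx⟩‖ ≤ 2 * (2 : ℝ) ^ (-(n : ℤ)) * ‖x‖ := by
  haveI := hfd n
  haveI := hfd (n + 1)
  have hle : Xn n ≤ Xn (n + 1) := hmono (Nat.le_succ n)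
  set X₀' : Submodule ℝ ↥(Xn (n + 1)) := Submodule.comap (Xn (n + 1)).subtype (Xn n) with hX₀'
  let e := Submodule.comapSubtypeEquivOfLe hle
  have hecoe : ∀ w : X₀', ((e w : ↥(Xn n)) : X) = ((w : ↥(Xn (n + 1))) : X) := fun w =>
    Submodule.comapSubtypeEquivOfLe_apply_coe hle w
  have henorm : ∀ w : X₀', ‖e w‖ = ‖w‖ := by
    intro w
    rw [show ‖e w‖ = ‖((e w : ↥(Xn n)) : X)‖ from rfl, hecoe w]
    rfl
  let eIso : X₀' →ₗᵢ[ℝ] ↥(Xn n) := ⟨e.toLinearMap, henorm⟩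
  let fn' : X₀' →L[ℝ] G := fn.comp eIso.toContinuousLinearMap
  have hfn' : IsEpsIsometry ((2 : ℝ) ^ (-(n : ℤ))) fn' := by
    intro w hw
    have hew : e w ≠ 0 := fun h => hw (by simpa using (e.map_eq_zero_iff).mp h)
    have := hfn (e w) hew
    rw [henorm w] at this
    exact this
  obtain ⟨g, hg, hnormlt⟩ := ks_part1 hG (↥(Xn (n + 1))) X₀' n fn' hfn'
  refine ⟨g, ?_, ?_⟩
  · have hcast : (-((n + 1 : ℕ) : ℤ)) = -(n : ℤ) - 1 := by push_cast; ring
    rw [hcast]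
    exact hg
  · intro x hx
    have hwmem : (⟨x, hle hx⟩ : ↥(Xn (n + 1))) ∈ X₀' := by
      simpa [hX₀', Submodule.mem_comap] using hx
    let w : X₀' := ⟨⟨x, hle hx⟩, hwmem⟩
    have hew : e w = ⟨x, hx⟩ := Subtype.ext (hecoe w)
    have h1 : fn' w = fn ⟨x, hx⟩ := by
      show fn (e w) = fn ⟨x, hx⟩
      rw [hew]
    have h2 : g ⟨x, hmono (Nat.le_succ n) hx⟩ - fn ⟨x, hx⟩
        = (g.comp X₀'.subtypeL - fn') w := by
      simp only [ContinuousLinearMap.sub_apply, h1]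
      rfl
    rw [h2]
    calc ‖(g.comp X₀'.subtypeL - fn') w‖ ≤ ‖g.comp X₀'.subtypeL - fn'‖ * ‖w‖ :=
          ContinuousLinearMap.le_opNorm _ _
      _ ≤ 2 * (2 : ℝ) ^ (-(n : ℤ)) * ‖w‖ :=
          mul_le_mul_of_nonneg_right hnormlt.le (norm_nonneg _)
      _ = 2 * (2 : ℝ) ^ (-(n : ℤ)) * ‖x‖ := by
          rw [show ‖w‖ = ‖x‖ from rfl]

lemma ks_base (hG : IsGurariy G) (Y : Type) [NormedAddCommGroup Y] [NormedSpace ℝ Y]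
    [FiniteDimensional ℝ Y] :
    ∃ f : Y →L[ℝ] G, IsEpsIsometry ((2 : ℝ) ^ (-((0 : ℕ) : ℤ))) f := by
  let j : (⊥ : Submodule ℝ Y) →ₗᵢ[ℝ] G :=
    ⟨0, by
      intro x
      obtain ⟨x, hx⟩ := x
      rw [Submodule.mem_bot] at hx
      subst hx
      simp⟩
  obtain ⟨g, hg, -⟩ := hG 1 one_pos Y ⊥ j
  refine ⟨g, ?_⟩
  have h1 : ((2 : ℝ) ^ (-((0 : ℕ) : ℤ))) = 1 := by norm_num
  rw [h1]
  exact hg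

lemma ks_pow_half (m : ℕ) : (2 : ℝ) ^ (-(m : ℤ)) = (1 / 2) ^ m := by
  rw [zpow_neg, zpow_natCast, one_div, inv_pow]

lemma ks_part2 (hG : IsGurariy G) [CompleteSpace G] (X : Type) [NormedAddCommGroup X]
    [NormedSpace ℝ X] [CompleteSpace X] (Xn : ℕ → Submodule ℝ X) (hmono : Monotone Xn)
    (hfd : ∀ n, FiniteDimensional ℝ (Xn n)) (hdense : Dense (⋃ n, (Xn n : Set X))) :
    Nonempty (X →ₗᵢ[ℝ] G) := by
  classical
  haveI := hfd 0
  obtain ⟨f0, hf0⟩ := ks_base hG (↥(Xn 0))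
  let Φ : ∀ n, {g : ↥(Xn n) →L[ℝ] G // IsEpsIsometry ((2 : ℝ) ^ (-(n : ℤ))) g} :=
    fun n => Nat.rec ⟨f0, hf0⟩
      (fun m p => ⟨(ks_step hG X Xn hmono hfd m p.1 p.2).choose,
        (ks_step hG X Xn hmono hfd m p.1 p.2).choose_spec.1⟩) n
  have hΦ : ∀ n (x : X) (hx : x ∈ Xn n),
      ‖(Φ (n + 1)).1 ⟨x, hmono (Nat.le_succ n) hx⟩ - (Φ n).1 ⟨x, hx⟩‖
        ≤ 2 * (2 : ℝ) ^ (-(n : ℤ)) * ‖x‖ :=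
    fun n => (ks_step hG X Xn hmono hfd n (Φ n).1 (Φ n).2).choose_spec.2
  let v : X → ℕ → G := fun x m => if h : x ∈ Xn m then (Φ m).1 ⟨x, h⟩ else 0
  have hv : ∀ (m : ℕ) (x : X) (h : x ∈ Xn m), v x m = (Φ m).1 ⟨x, h⟩ := by
    intro m x h
    simp [v, dif_pos h]
  have hvb : ∀ (x : X) (m : ℕ), x ∈ Xn m →
      dist (v x m) (v x (m + 1)) ≤ 2 * (2 : ℝ) ^ (-(m : ℤ)) * ‖x‖ := by
    intro x m h
    rw [dist_eq_norm, hv m x h, hv (m + 1) x (hmono (Nat.le_succ m) h), norm_sub_rev]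
    exact hΦ m x h
  have hcauchy : ∀ (x : X) (n : ℕ), x ∈ Xn n → ∃ L, Filter.Tendsto (v x) Filter.atTop (nhds L) := by
    intro x n hxn
    have hb : ∀ m, dist (v x (n + m)) (v x (n + m + 1))
        ≤ (2 * (2 : ℝ) ^ (-(n : ℤ)) * ‖x‖) * (1 / 2) ^ m := by
      intro m
      refine (hvb x (n + m) (hmono (Nat.le_add_right n m) hxn)).trans_eq ?_
      have : (2 : ℝ) ^ (-((n + m : ℕ) : ℤ)) = (2 : ℝ) ^ (-(n : ℤ)) * (1 / 2) ^ m := by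
        push_cast
        rw [neg_add, zpow_add₀ (by norm_num : (2:ℝ) ≠ 0)]
        simp [ks_pow_half]
      rw [this]
      ring
    have hc : CauchySeq (fun m => v x (n + m)) :=
      cauchySeq_of_le_geometric (1 / 2) _ (by norm_num) hb
    obtain ⟨L, hL⟩ := cauchySeq_tendsto_of_complete hc
    refine ⟨L, (Filter.tendsto_add_atTop_iff_nat n).1 ?_⟩
    simpa [add_comm] using hL
  let T : X → G := fun x => if h : ∃ L, Filter.Tendsto (v x) Filter.atTop (nhds L)
    then h.choose else 0
  have hT : ∀ (x : X) (n : ℕ), x ∈ Xn n → Filter.Tendsto (v x) Filter.atTop (nhds (T x)) := by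
    intro x n hx
    have h := hcauchy x n hx
    simp only [T, dif_pos h]
    exact h.choose_spec
  have hhalf : Filter.Tendsto (fun m : ℕ => (2 : ℝ) ^ (-(m : ℤ))) Filter.atTop (nhds 0) := by
    simp only [ks_pow_half]
    exact tendsto_pow_atTop_nhds_zero_of_lt_one (by norm_num) (by norm_num)
  have hTnorm : ∀ (x : X) (n : ℕ), x ∈ Xn n → ‖T x‖ = ‖x‖ := by
    intro x n hx
    have h1 : Filter.Tendsto (fun m => ‖v x m‖) Filter.atTop (nhds ‖T x‖) := (hT x n hx).norm
    rcases eq_or_ne x 0 with rfl | hx0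
    · have hz : ∀ m, v (0 : X) m = 0 := by
        intro m
        by_cases h : (0 : X) ∈ Xn m
        · rw [hv m 0 h]
          show (Φ m).1 0 = 0
          exact map_zero _
        · simp [v, dif_neg h]
      have : T (0 : X) = 0 := by
        refine tendsto_nhds_unique (hT 0 n hx) ?_
        rw [funext hz]
        exact tendsto_const_nhds
      rw [this]
      simp
    · have h2 : Filter.Tendsto (fun m : ℕ => (1 : ℝ) + (2 : ℝ) ^ (-(m : ℤ)))
          Filter.atTop (nhds (1 + 0)) :=
        Filter.Tendsto.add
          (tendsto_const_nhds : Filter.Tendsto (fun _ : ℕ => (1:ℝ)) Filter.atTop (nhds 1)) hhalf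
      have hupper : Filter.Tendsto (fun m : ℕ => (1 + (2 : ℝ) ^ (-(m : ℤ))) * ‖x‖)
          Filter.atTop (nhds ‖x‖) := by
        have h3 := h2.mul_const ‖x‖
        simpa using h3
      have hlower : Filter.Tendsto (fun m : ℕ => (1 + (2 : ℝ) ^ (-(m : ℤ)))⁻¹ * ‖x‖)
          Filter.atTop (nhds ‖x‖) := by
        have h4 := (h2.inv₀ (by norm_num : (1:ℝ) + 0 ≠ 0)).mul_const ‖x‖
        simpa using h4
      have hsq : Filter.Tendsto (fun m => ‖v x m‖) Filter.atTop (nhds ‖x‖) := by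
        refine tendsto_of_tendsto_of_tendsto_of_le_of_le' hlower hupper ?_ ?_
        · refine Filter.eventually_atTop.mpr ⟨n, fun m hm => ?_⟩
          have hxm : x ∈ Xn m := hmono hm hx
          rw [hv m x hxm]
          have hne : (⟨x, hxm⟩ : ↥(Xn m)) ≠ 0 := by
            intro h
            exact hx0 (by simpa using congrArg (Subtype.val) h)
          exact ((Φ m).2 ⟨x, hxm⟩ hne).1.le
        · refine Filter.eventually_atTop.mpr ⟨n, fun m hm => ?_⟩
          have hxm : x ∈ Xn m := hmono hm hx
          rw [hv m x hxm]
          have hne : (⟨x, hxm⟩ : ↥(Xn m)) ≠ 0 := by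
            intro h
            exact hx0 (by simpa using congrArg (Subtype.val) h)
          exact ((Φ m).2 ⟨x, hxm⟩ hne).2.le
      exact tendsto_nhds_unique h1 hsq
  have haddT : ∀ (x y : X) (n : ℕ), x ∈ Xn n → y ∈ Xn n → T (x + y) = T x + T y := by
    intro x y n hx hy
    have heq : ∀ᶠ m in Filter.atTop, v x m + v y m = v (x + y) m := by
      refine Filter.eventually_atTop.mpr ⟨n, fun m hm => ?_⟩
      have hxm : x ∈ Xn m := hmono hm hx
      have hym : y ∈ Xn m := hmono hm hy
      rw [hv m x hxm, hv m y hym, hv m (x + y) (add_mem hxm hym)]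
      show _ = (Φ m).1 (⟨x, hxm⟩ + ⟨y, hym⟩)
      rw [map_add]
    exact tendsto_nhds_unique (hT (x + y) n (add_mem hx hy))
      (((hT x n hx).add (hT y n hy)).congr' heq)
  have hsmulT : ∀ (c : ℝ) (x : X) (n : ℕ), x ∈ Xn n → T (c • x) = c • T x := by
    intro c x n hx
    have heq : ∀ᶠ m in Filter.atTop, c • v x m = v (c • x) m := by
      refine Filter.eventually_atTop.mpr ⟨n, fun m hm => ?_⟩
      have hxm : x ∈ Xn m := hmono hm hx
      rw [hv m x hxm, hv m (c • x) (Submodule.smul_mem _ c hxm)]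
      show _ = (Φ m).1 (c • ⟨x, hxm⟩)
      rw [map_smul]
    exact tendsto_nhds_unique (hT (c • x) n (Submodule.smul_mem _ c hx))
      (((hT x n hx).const_smul c).congr' heq)
  set M : Submodule ℝ X := ⨆ n, Xn n with hM
  have hcoeM : (M : Set X) = ⋃ n, (Xn n : Set X) :=
    Submodule.coe_iSup_of_chain ⟨Xn, hmono⟩
  have hmem : ∀ x : X, x ∈ M → ∃ n, x ∈ Xn n := by
    intro x hx
    have : x ∈ ⋃ n, (Xn n : Set X) := hcoeM ▸ hx
    simpa using this
  let Lmap : ↥M →ₗ[ℝ] G :=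
    { toFun := fun x => T ↑x
      map_add' := by
        intro x y
        obtain ⟨nx, hnx⟩ := hmem x x.2
        obtain ⟨ny, hny⟩ := hmem y y.2
        exact haddT x y (max nx ny) (hmono (le_max_left nx ny) hnx)
          (hmono (le_max_right nx ny) hny)
      map_smul' := by
        intro c x
        obtain ⟨nx, hnx⟩ := hmem x x.2
        exact hsmulT c x nx hnx }
  let J : ↥M →ₗᵢ[ℝ] G :=
    ⟨Lmap, by
      intro x
      obtain ⟨nx, hnx⟩ := hmem x x.2
      exact hTnorm x nx hnx⟩
  have hdM : Dense (M : Set X) := hcoeM ▸ hdense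
  have hde : DenseRange ⇑M.subtypeL := by
    show Dense (Set.range ⇑M.subtypeL)
    rw [show Set.range ⇑M.subtypeL = (M : Set X) from Subtype.range_coe]
    exact hdM
  have hui : IsUniformInducing ⇑M.subtypeL := isometry_subtype_coe.isUniformInducing
  let E : X →L[ℝ] G := (J.toContinuousLinearMap).extend M.subtypeL
  have hE : ∀ x : ↥M, E ↑x = J x := fun x =>
    ContinuousLinearMap.extend_eq (f := J.toContinuousLinearMap) (e := M.subtypeL) hde hui x
  have hEnorm : ∀ x : X, ‖E x‖ = ‖x‖ := by
    have hext := Continuous.ext_on hdM (E.continuous.norm) continuous_norm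
      (f := fun x : X => ‖E x‖) (g := fun x : X => ‖x‖) ?_
    · exact fun x => congrFun hext x
    · intro x hx
      have h1 : E x = J ⟨x, hx⟩ := hE ⟨x, hx⟩
      show ‖E x‖ = ‖x‖
      rw [h1, J.norm_map]
      rfl
  exact ⟨⟨E.toLinearMap, hEnorm⟩⟩

end Part2

/-- Kubiś–Solecki: in the Gurariy space `G`, every `2⁻ⁿ`-isometry `f : X₀ → G` defined on a
subspace `X₀` of a finite-dimensional space `X₁` admits a `2⁻⁽ⁿ⁺¹⁾`-isometry `g : X₁ → G`
with `‖g|_{X₀} − f‖ < 2·2⁻ⁿ`; consequently every separable Banach space with a dense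
increasing union of finite-dimensional subspaces embeds linearly isometrically into `G`. -/
theorem stmt11 (G : Type) [NormedAddCommGroup G] [NormedSpace ℝ G] [CompleteSpace G]
    [TopologicalSpace.SeparableSpace G] (hG : IsGurariy G) :
    (∀ (Y : Type) [NormedAddCommGroup Y] [NormedSpace ℝ Y] [FiniteDimensional ℝ Y]
      (X₀ : Submodule ℝ Y) (n : ℕ) (f : X₀ →L[ℝ] G),
      IsEpsIsometry ((2 : ℝ) ^ (-(n : ℤ))) f →
      ∃ g : Y →L[ℝ] G, IsEpsIsometry ((2 : ℝ) ^ (-(n : ℤ) - 1)) g ∧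
        ‖g.comp X₀.subtypeL - f‖ < 2 * (2 : ℝ) ^ (-(n : ℤ))) ∧
    (∀ (X : Type) [NormedAddCommGroup X] [NormedSpace ℝ X] [CompleteSpace X]
      [TopologicalSpace.SeparableSpace X] (Xn : ℕ → Submodule ℝ X),
      Monotone Xn → (∀ n, FiniteDimensional ℝ (Xn n)) →
      Dense (⋃ n, (Xn n : Set X)) → Nonempty (X →ₗᵢ[ℝ] G)) := by
  constructor
  · intro Y _ _ _ X₀ n f hf
    exact ks_part1 hG Y X₀ n f hf
  · intro X _ _ _ _ Xn hmono hfd hdense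
    exact ks_part2 hG X Xn hmono hfd hdense
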